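/- arXiv:0903.4848 — 2 statements merged into one kernel-verified Lean document; each statement's English description precedes it below -/
import Mathlib

section
/- With the notation of the band-matrix setup, assume in addition that p_M(i) ≠ 0 and p_M(−i) ≠ 0. Then b_{r−(2M+k₀−k₀◊)}^{r} ≠ 0 for every integer r ≥ 2M + k₀ + max(−k₀◊, 0). -/
open MeasureTheory

/-- The wavepacket basis function `ψ_{k,n}(x) = (x+i)^{-(k+1)} ((x-i)/(x+i))^n`. -/
noncomputable def psi (k n : ℤ) : ℝ → ℂ := fun x =>
  ((x : ℂ) + Complex.I) ^ (-(k + 1)) * (((x : ℂ) - Complex.I) / ((x : ℂ) + Complex.I)) ^ n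

/-- The sorting index `ñ(k, n) = ⌊-(k+1)/2⌋ + (-1)^{n+k+1} ⌊(n+1)/2⌋`. -/
noncomputable def ntilde (k : ℤ) (n : ℕ) : ℤ :=
  ⌊(-(k : ℚ) - 1) / 2⌋ + (if Even ((n : ℤ) + k + 1) then 1 else -1) * ⌊((n : ℚ) + 1) / 2⌋

/-- The sorted basis function `e^{(k)}_n = π^{-1/2} ψ_{k, ñ(k,n)}`. -/
noncomputable def ebasis (k : ℤ) (n : ℕ) : ℝ → ℂ := fun x =>
  (((Real.sqrt Real.pi)⁻¹ : ℝ) : ℂ) * psi k (ntilde k n) x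

/-- `s₀ = max_{0 ≤ m ≤ M} (deg p_m - m)`. -/
noncomputable def s0 (M : ℕ) (p : ℕ → Polynomial ℂ) : ℤ :=
  Finset.sup' (Finset.range (M + 1)) Finset.nonempty_range_add_one
    fun m => ((p m).natDegree : ℤ) - (m : ℤ)

/-- The differential operator `(P f)(x) = Σ_{m=0}^{M} p_m(x) f^{(m)}(x)`. -/
noncomputable def Pop (M : ℕ) (p : ℕ → Polynomial ℂ) (f : ℝ → ℂ) : ℝ → ℂ := fun x =>
  ∑ m ∈ Finset.range (M + 1), (p m).eval (x : ℂ) * deriv^[m] f x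

/-- The band matrix `b_m^n = ∫ (P e_n)(x) conj(e◊_m(x)) (x²+1)^{k₀◊} dx`, where
`e_n = e^{(k₀)}_n` and `e◊_m = e^{(k₀◊)}_m`. -/
noncomputable def bmat (M : ℕ) (p : ℕ → Polynomial ℂ) (k₀ kd : ℤ) (m n : ℕ) : ℂ :=
  ∫ x : ℝ, Pop M p (ebasis k₀ n) x * (starRingEnd ℂ) (ebasis kd m x) *
    ((((x ^ 2 + 1) ^ kd : ℝ)) : ℂ)

/-- The weighted measure `(x² + 1)^k dx` on `ℝ`. -/
noncomputable def wMeasure (k : ℤ) : Measure ℝ :=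
  volume.withDensity fun x => ENNReal.ofReal ((x ^ 2 + 1) ^ k)

/-! ### Auxiliary -/

open MeasureTheory Complex Filter Finset

noncomputable def W (a b : ℤ) : ℝ → ℂ := fun x =>
  ((x : ℂ) + Complex.I) ^ a * ((x : ℂ) - Complex.I) ^ b

lemma u_ne (x : ℝ) : (x : ℂ) + Complex.I ≠ 0 := by
  intro h; have := congrArg Complex.im h; simp at this

lemma v_ne (x : ℝ) : (x : ℂ) - Complex.I ≠ 0 := by
  intro h; have := congrArg Complex.im h; simp at this

lemma sqrt_ge_one (x : ℝ) : 1 ≤ Real.sqrt (x ^ 2 + 1) :=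
  Real.one_le_sqrt.mpr (by nlinarith)

lemma norm_u (x : ℝ) : ‖(x : ℂ) + Complex.I‖ = Real.sqrt (x ^ 2 + 1) := by
  rw [Complex.norm_def, Complex.normSq_apply]
  norm_num [sq]

lemma norm_v (x : ℝ) : ‖(x : ℂ) - Complex.I‖ = Real.sqrt (x ^ 2 + 1) := by
  rw [Complex.norm_def, Complex.normSq_apply]
  norm_num [sq]

lemma norm_W (a b : ℤ) (x : ℝ) :
    ‖W a b x‖ = Real.sqrt (x ^ 2 + 1) ^ (a + b) := by
  have h1 : (0:ℝ) < Real.sqrt (x ^ 2 + 1) := lt_of_lt_of_le one_pos (sqrt_ge_one x)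
  rw [W, norm_mul, norm_zpow, norm_zpow, norm_u, norm_v, ← zpow_add₀ h1.ne']

lemma sq_sqrt' (x : ℝ) : Real.sqrt (x ^ 2 + 1) ^ (2:ℤ) = 1 + x ^ 2 := by
  rw [zpow_two, Real.mul_self_sqrt (by positivity)]; ring

lemma norm_W_le (a b : ℤ) (hab : a + b ≤ -2) (x : ℝ) :
    ‖W a b x‖ ≤ (1 + x ^ 2)⁻¹ := by
  rw [norm_W]
  calc Real.sqrt (x ^ 2 + 1) ^ (a + b) ≤ Real.sqrt (x ^ 2 + 1) ^ (-2 : ℤ) :=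
        zpow_le_zpow_right₀ (sqrt_ge_one x) hab
    _ = (1 + x ^ 2)⁻¹ := by rw [zpow_neg, sq_sqrt']

lemma W_continuous (a b : ℤ) : Continuous (W a b) := by
  apply Continuous.mul
  · exact (Continuous.add Complex.continuous_ofReal continuous_const).zpow₀ a
      (fun x => Or.inl (u_ne x))
  · exact (Continuous.sub Complex.continuous_ofReal continuous_const).zpow₀ b
      (fun x => Or.inl (v_ne x))

lemma W_integrable {a b : ℤ} (hab : a + b ≤ -2) : Integrable (W a b) :=
  Integrable.mono' integrable_inv_one_add_sq (W_continuous a b).aestronglyMeasurable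
    (Eventually.of_forall (norm_W_le a b hab))

lemma W_hasDerivAt (a b : ℤ) (x : ℝ) :
    HasDerivAt (W a b) ((a : ℂ) * W (a - 1) b x + (b : ℂ) * W a (b - 1) x) x := by
  have hu : HasDerivAt (fun z : ℂ => (z + Complex.I) ^ a)
      ((a : ℂ) * ((x : ℂ) + Complex.I) ^ (a - 1)) (x : ℂ) := by
    have := (hasDerivAt_zpow a ((x : ℂ) + Complex.I) (Or.inl (u_ne x))).comp (x : ℂ)
      ((hasDerivAt_id (x : ℂ)).add_const Complex.I)
    simpa [Function.comp_def] using this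
  have hv : HasDerivAt (fun z : ℂ => (z - Complex.I) ^ b)
      ((b : ℂ) * ((x : ℂ) - Complex.I) ^ (b - 1)) (x : ℂ) := by
    have := (hasDerivAt_zpow b ((x : ℂ) - Complex.I) (Or.inl (v_ne x))).comp (x : ℂ)
      ((hasDerivAt_id (x : ℂ)).sub_const Complex.I)
    simpa [Function.comp_def] using this
  have := (hu.mul hv).comp_ofReal (z := x)
  refine this.congr_deriv ?_
  simp only [W]
  ring

lemma W_differentiable (a b : ℤ) : Differentiable ℝ (W a b) :=
  fun x => (W_hasDerivAt a b x).differentiableAt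

noncomputable def Iw (a b : ℤ) : ℂ := ∫ x : ℝ, W a b x

lemma sqrt_tendsto_atTop : Tendsto (fun x : ℝ => Real.sqrt (x ^ 2 + 1)) atTop atTop := by
  apply tendsto_atTop_mono (fun x => ?_) tendsto_id
  calc id x ≤ |x| := le_abs_self x
    _ ≤ Real.sqrt (x ^ 2 + 1) := by
        rw [← Real.sqrt_sq_eq_abs]; exact Real.sqrt_le_sqrt (by linarith)

lemma sqrt_tendsto_atBot : Tendsto (fun x : ℝ => Real.sqrt (x ^ 2 + 1)) atBot atTop := by
  apply tendsto_atTop_mono (fun x => ?_) tendsto_neg_atBot_atTop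
  calc -x ≤ |x| := neg_le_abs x
    _ ≤ Real.sqrt (x ^ 2 + 1) := by
        rw [← Real.sqrt_sq_eq_abs]; exact Real.sqrt_le_sqrt (by linarith)

lemma tendsto_zpow_helper (c : ℤ) (hc : c ≤ -1) {l : Filter ℝ}
    (h : Tendsto (fun x : ℝ => Real.sqrt (x ^ 2 + 1)) l atTop)
    (g : ℝ → ℂ) (hg : ∀ x, ‖g x‖ = Real.sqrt (x ^ 2 + 1) ^ c) :
    Tendsto g l (nhds 0) := by
  rw [tendsto_zero_iff_norm_tendsto_zero]
  simp_rw [hg]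
  exact (tendsto_zpow_atTop_zero (by omega : c < 0)).comp h

lemma Iw_u_zero {c : ℤ} (hc : c ≤ -2) : Iw c 0 = 0 := by
  have hne : ((c : ℂ) + 1) ≠ 0 := by
    have : ((c + 1 : ℤ) : ℂ) ≠ 0 := Int.cast_ne_zero.mpr (by omega)
    push_cast at this; exact this
  set G : ℝ → ℂ := fun x => ((x : ℂ) + Complex.I) ^ (c + 1) / ((c : ℂ) + 1) with hGdef
  have hG : ∀ x : ℝ, HasDerivAt G (W c 0 x) x := by
    intro x
    have h2 := (W_hasDerivAt (c + 1) 0 x).div_const ((c : ℂ) + 1)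
    have hfun : G = fun x => W (c + 1) 0 x / ((c : ℂ) + 1) := by
      funext y; simp [hGdef, W]
    rw [hfun]
    refine h2.congr_deriv ?_
    have : (c + 1 - 1 : ℤ) = c := by ring
    rw [this]
    field_simp
    push_cast; ring
  have hnorm : ∀ x : ℝ, ‖((x : ℂ) + Complex.I) ^ (c + 1)‖ = Real.sqrt (x ^ 2 + 1) ^ (c + 1) :=
    fun x => by rw [norm_zpow, norm_u]
  have htop : Tendsto G atTop (nhds 0) := by
    have h0 := tendsto_zpow_helper (c + 1) (by omega) sqrt_tendsto_atTop _ hnorm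
    simpa [hGdef] using h0.div_const ((c : ℂ) + 1)
  have hbot : Tendsto G atBot (nhds 0) := by
    have h0 := tendsto_zpow_helper (c + 1) (by omega) sqrt_tendsto_atBot _ hnorm
    simpa [hGdef] using h0.div_const ((c : ℂ) + 1)
  have := integral_of_hasDerivAt_of_tendsto hG (W_integrable (by omega)) hbot htop
  rw [Iw, this, sub_zero]

lemma Iw_v_zero {c : ℤ} (hc : c ≤ -2) : Iw 0 c = 0 := by
  have hne : ((c : ℂ) + 1) ≠ 0 := by
    have : ((c + 1 : ℤ) : ℂ) ≠ 0 := Int.cast_ne_zero.mpr (by omega)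
    push_cast at this; exact this
  set G : ℝ → ℂ := fun x => ((x : ℂ) - Complex.I) ^ (c + 1) / ((c : ℂ) + 1) with hGdef
  have hG : ∀ x : ℝ, HasDerivAt G (W 0 c x) x := by
    intro x
    have h2 := (W_hasDerivAt 0 (c + 1) x).div_const ((c : ℂ) + 1)
    have hfun : G = fun x => W 0 (c + 1) x / ((c : ℂ) + 1) := by
      funext y; simp [hGdef, W]
    rw [hfun]
    refine h2.congr_deriv ?_
    have : (c + 1 - 1 : ℤ) = c := by ring
    rw [this]
    field_simp
    push_cast; ring
  have hnorm : ∀ x : ℝ, ‖((x : ℂ) - Complex.I) ^ (c + 1)‖ = Real.sqrt (x ^ 2 + 1) ^ (c + 1) :=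
    fun x => by rw [norm_zpow, norm_v]
  have htop : Tendsto G atTop (nhds 0) := by
    have h0 := tendsto_zpow_helper (c + 1) (by omega) sqrt_tendsto_atTop _ hnorm
    simpa [hGdef] using h0.div_const ((c : ℂ) + 1)
  have hbot : Tendsto G atBot (nhds 0) := by
    have h0 := tendsto_zpow_helper (c + 1) (by omega) sqrt_tendsto_atBot _ hnorm
    simpa [hGdef] using h0.div_const ((c : ℂ) + 1)
  have := integral_of_hasDerivAt_of_tendsto hG (W_integrable (by omega)) hbot htop
  rw [Iw, this, sub_zero]

lemma Iw_base : Iw (-1) (-1) = (Real.pi : ℂ) := by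
  have hW : ∀ x : ℝ, W (-1) (-1) x = (((1 + x ^ 2)⁻¹ : ℝ) : ℂ) := by
    intro x
    have hprod : ((x : ℂ) + Complex.I) * ((x : ℂ) - Complex.I) = (((1 + x ^ 2 : ℝ)) : ℂ) := by
      push_cast
      ring_nf
      rw [Complex.I_sq]
      ring
    rw [W, zpow_neg_one, zpow_neg_one, ← mul_inv, hprod, Complex.ofReal_inv]
  rw [Iw]
  simp_rw [hW]
  have h := ContinuousLinearMap.integral_comp_comm Complex.ofRealCLM
    (integrable_inv_one_add_sq) (μ := volume)
  simp only [Complex.ofRealCLM_apply] at h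
  rw [h, integral_univ_inv_one_add_sq]

lemma two_I_ne : (2 * Complex.I) ≠ 0 := by simp [Complex.I_ne_zero]

lemma W_step (a b : ℤ) (x : ℝ) : W (a + 1) b x = W a (b + 1) x + 2 * Complex.I * W a b x := by
  simp only [W, zpow_add_one₀ (u_ne x), zpow_add_one₀ (v_ne x)]
  ring

lemma Iw_rec {a b : ℤ} (h : a + b ≤ -3) :
    Iw (a + 1) b = Iw a (b + 1) + 2 * Complex.I * Iw a b := by
  rw [Iw, Iw, Iw]
  calc ∫ x : ℝ, W (a + 1) b x = ∫ x : ℝ, (W a (b + 1) x + 2 * Complex.I * W a b x) := by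
        simp_rw [W_step]
    _ = (∫ x : ℝ, W a (b + 1) x) + ∫ x : ℝ, 2 * Complex.I * W a b x :=
        integral_add (W_integrable (by omega)) ((W_integrable (by omega)).const_mul _)
    _ = (∫ x : ℝ, W a (b + 1) x) + 2 * Complex.I * ∫ x : ℝ, W a b x := by
        rw [integral_const_mul]

lemma Iw_a_nonneg : ∀ (n : ℕ) (b : ℤ), b ≤ -2 - n → Iw n b = 0
  | 0, b, hb => by exact_mod_cast Iw_v_zero (by exact_mod_cast hb)
  | (n + 1), b, hb => by
      have h := Iw_rec (a := (n : ℤ)) (b := b) (by push_cast at hb ⊢; omega)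
      have h1 := Iw_a_nonneg n (b + 1) (by push_cast at hb ⊢; omega)
      have h2 := Iw_a_nonneg n b (by push_cast at hb ⊢; omega)
      push_cast
      rw [h, h1, h2]
      ring

lemma Iw_b_nonneg : ∀ (n : ℕ) (a : ℤ), a ≤ -2 - n → Iw a n = 0
  | 0, a, ha => by exact_mod_cast Iw_u_zero (by exact_mod_cast ha)
  | (n + 1), a, ha => by
      have h := Iw_rec (a := a) (b := (n : ℤ)) (by push_cast at ha ⊢; omega)
      have h1 := Iw_b_nonneg n (a + 1) (by push_cast at ha ⊢; omega)
      have h2 := Iw_b_nonneg n a (by push_cast at ha ⊢; omega)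
      rw [h1] at h
      push_cast
      rw [h, h2]
      ring

lemma Iw_vanish {a b : ℤ} (hab : a + b ≤ -2) (h : 0 ≤ a ∨ 0 ≤ b) : Iw a b = 0 := by
  rcases h with h | h
  · obtain ⟨n, rfl⟩ := Int.eq_ofNat_of_zero_le h
    exact Iw_a_nonneg n b (by omega)
  · obtain ⟨n, rfl⟩ := Int.eq_ofNat_of_zero_le h
    exact Iw_b_nonneg n a (by omega)

lemma Iw_A : ∀ n : ℕ, Iw (-1 - (n : ℤ)) (-1) = (Real.pi : ℂ) * (2 * Complex.I) ^ (-(n : ℤ))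
  | 0 => by simpa using Iw_base
  | (n + 1) => by
      have IH := Iw_A n
      have h0 : Iw (-2 - (n : ℤ)) 0 = 0 := Iw_u_zero (by omega)
      have h := Iw_rec (a := -2 - (n : ℤ)) (b := -1) (by omega)
      rw [show (-2 - (n : ℤ)) + 1 = -1 - (n : ℤ) by ring] at h
      rw [IH, show (-1 : ℤ) + 1 = 0 by ring, h0] at h
      have hgoal : Iw (-2 - (n : ℤ)) (-1) =
          (Real.pi : ℂ) * (2 * Complex.I) ^ (-(n : ℤ)) / (2 * Complex.I) := by
        rw [eq_div_iff two_I_ne]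
        linear_combination -h
      rw [show (-1 - ((n : ℕ) + 1 : ℕ) : ℤ) = -2 - (n : ℤ) by push_cast; ring, hgoal,
        show (-(((n : ℕ) + 1 : ℕ) : ℤ)) = (-(n : ℤ)) + (-1) by push_cast; ring,
        zpow_add₀ two_I_ne, zpow_neg_one]
      rw [div_eq_mul_inv]
      ring

lemma Iw_B : ∀ n : ℕ, Iw (-1) (-1 - (n : ℤ)) = (Real.pi : ℂ) * (-(2 * Complex.I)) ^ (-(n : ℤ))
  | 0 => by simpa using Iw_base
  | (n + 1) => by
      have IH := Iw_B n
      have h0 : Iw 0 (-2 - (n : ℤ)) = 0 := Iw_v_zero (by omega)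
      have h := Iw_rec (a := -1) (b := -2 - (n : ℤ)) (by omega)
      rw [show (-1 : ℤ) + 1 = 0 by ring, show (-2 - (n : ℤ)) + 1 = -1 - (n : ℤ) by ring,
        h0, IH] at h
      have hgoal : Iw (-1) (-2 - (n : ℤ)) =
          -((Real.pi : ℂ) * (-(2 * Complex.I)) ^ (-(n : ℤ))) / (2 * Complex.I) := by
        rw [eq_div_iff two_I_ne]
        linear_combination -h
      rw [show (-1 - ((n : ℕ) + 1 : ℕ) : ℤ) = -2 - (n : ℤ) by push_cast; ring, hgoal,
        show (-(((n : ℕ) + 1 : ℕ) : ℤ)) = (-(n : ℤ)) + (-1) by push_cast; ring,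
        zpow_add₀ (neg_ne_zero.mpr two_I_ne), zpow_neg_one, inv_neg]
      rw [div_eq_mul_inv]
      ring

lemma Iw_eval_A {a : ℤ} (ha : a ≤ -1) :
    Iw a (-1) = (Real.pi : ℂ) * (2 * Complex.I) ^ (a + 1) := by
  obtain ⟨n, hn⟩ : ∃ n : ℕ, a = -1 - (n : ℤ) := ⟨(-1 - a).toNat, by omega⟩
  subst hn
  rw [Iw_A n, show (-1 - (n : ℤ) + 1) = -(n : ℤ) by ring]

lemma Iw_eval_B {b : ℤ} (hb : b ≤ -1) :
    Iw (-1) b = (Real.pi : ℂ) * (-(2 * Complex.I)) ^ (b + 1) := by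
  obtain ⟨n, hn⟩ : ∃ n : ℕ, b = -1 - (n : ℤ) := ⟨(-1 - b).toNat, by omega⟩
  subst hn
  rw [Iw_B n, show (-1 - (n : ℤ) + 1) = -(n : ℤ) by ring]

/-! ### Part 2: algebra -/

noncomputable def ff (a : ℤ) (j : ℕ) : ℂ := ∏ i ∈ Finset.range j, ((a : ℂ) - (i : ℕ))

@[simp] lemma ff_zero (a : ℤ) : ff a 0 = 1 := by simp [ff]

lemma ff_succ (a : ℤ) (j : ℕ) : ff a (j + 1) = ff a j * ((a : ℂ) - (j : ℕ)) :=
  Finset.prod_range_succ _ _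

lemma W_congr {a b a' b' : ℤ} (ha : a = a') (hb : b = b') (x : ℝ) : W a b x = W a' b' x := by
  rw [ha, hb]

lemma W_mul (a b c d : ℤ) (x : ℝ) : W a b x * W c d x = W (a + c) (b + d) x := by
  simp only [W, zpow_add₀ (u_ne x), zpow_add₀ (v_ne x)]
  ring

lemma W_conj (a b : ℤ) (x : ℝ) : (starRingEnd ℂ) (W a b x) = W b a x := by
  simp only [W, map_mul, map_zpow₀, map_add, map_sub, Complex.conj_ofReal, Complex.conj_I]
  rw [sub_neg_eq_add]
  ring

lemma weight_eq (kd : ℤ) (x : ℝ) : (((x ^ 2 + 1) ^ kd : ℝ) : ℂ) = W kd kd x := by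
  rw [W, ← mul_zpow]
  have h1 : ((x : ℂ) + Complex.I) * ((x : ℂ) - Complex.I) = (((x ^ 2 + 1 : ℝ)) : ℂ) := by
    push_cast
    ring_nf
    rw [Complex.I_sq]
    ring
  rw [h1, ← Complex.ofReal_zpow]

lemma psi_eq (k n : ℤ) : psi k n = W (-(k + 1) - n) n := by
  funext x
  simp only [psi, W, div_zpow, zpow_sub₀ (u_ne x)]
  ring

lemma ebasis_eq (k : ℤ) (n : ℕ) : ebasis k n =
    fun x => (((Real.sqrt Real.pi)⁻¹ : ℝ) : ℂ) * W (-(k + 1) - ntilde k n) (ntilde k n) x := by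
  funext x
  rw [ebasis, psi_eq]

lemma iter_deriv_W (c : ℂ) (a b : ℤ) (m : ℕ) :
    deriv^[m] (fun x => c * W a b x) = fun x => ∑ j ∈ Finset.range (m + 1),
      (c * (m.choose j : ℂ) * ff a j * ff b (m - j)) * W (a - j) (b - m + j) x := by
  induction m with
  | zero => funext x; simp
  | succ m IH =>
    rw [Function.iterate_succ_apply', IH]
    funext x
    rw [deriv_fun_sum (fun (j : ℕ) _ => ((W_hasDerivAt (a - j) (b - m + j) x).const_mul
      (c * (m.choose j : ℂ) * ff a j * ff b (m - j))).differentiableAt)]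
    have hder : ∀ j ∈ Finset.range (m + 1),
        deriv (fun y => (c * (m.choose j : ℂ) * ff a j * ff b (m - j)) * W (a - j) (b - m + j) y) x
        = (c * (m.choose j : ℂ) * ff a (j + 1) * ff b (m - j)) * W (a - j - 1) (b - m + j) x
          + (c * (m.choose j : ℂ) * ff a j * ff b (m - j + 1)) * W (a - j) (b - m + j - 1) x := by
      intro j hj
      have hj' : j ≤ m := Nat.lt_succ_iff.mp (Finset.mem_range.mp hj)
      rw [((W_hasDerivAt (a - j) (b - m + j) x).const_mul
          (c * (m.choose j : ℂ) * ff a j * ff b (m - j))).deriv]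
      rw [ff_succ a j, ff_succ b (m - j)]
      have hc1 : ((a - (j : ℕ) : ℤ) : ℂ) = (a : ℂ) - (j : ℕ) := by push_cast; ring
      have hc2 : ((b - (m : ℕ) + (j : ℕ) : ℤ) : ℂ) = (b : ℂ) - ((m - j : ℕ) : ℂ) := by
        push_cast [Nat.cast_sub hj']; ring
      rw [hc1, hc2]
      ring
    rw [Finset.sum_congr rfl hder, Finset.sum_add_distrib]
    -- reshape the target
    rw [Finset.sum_range_succ' (fun j => (c * ((m + 1).choose j : ℂ) * ff a j * ff b (m + 1 - j))
      * W (a - j) (b - (m + 1 : ℕ) + j) x) (m + 1)]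
    have hsplit : ∀ j ∈ Finset.range (m + 1),
        (c * ((m + 1).choose (j + 1) : ℂ) * ff a (j + 1) * ff b (m + 1 - (j + 1)))
          * W (a - (j + 1 : ℕ)) (b - (m + 1 : ℕ) + (j + 1 : ℕ)) x
        = (c * (m.choose j : ℂ) * ff a (j + 1) * ff b (m - j)) * W (a - j - 1) (b - m + j) x
          + (c * (m.choose (j + 1) : ℂ) * ff a (j + 1) * ff b (m - j))
            * W (a - j - 1) (b - m + j) x := by
      intro j hj
      have h1 : m + 1 - (j + 1) = m - j := by omega
      have h2 : (a - ((j : ℕ) + 1 : ℕ) : ℤ) = a - j - 1 := by push_cast; ring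
      have h3 : (b - ((m : ℕ) + 1 : ℕ) + ((j : ℕ) + 1 : ℕ) : ℤ) = b - m + j := by push_cast; ring
      rw [Nat.choose_succ_succ, h1, W_congr h2 h3]
      push_cast
      ring
    rw [Finset.sum_congr rfl hsplit, Finset.sum_add_distrib]
    -- remaining: match the three pieces
    have hB2 : ∑ j ∈ Finset.range (m + 1),
        (c * (m.choose j : ℂ) * ff a j * ff b (m - j + 1)) * W (a - j) (b - m + j - 1) x
        = (∑ j ∈ Finset.range (m + 1),
            (c * (m.choose (j + 1) : ℂ) * ff a (j + 1) * ff b (m - j)) * W (a - j - 1) (b - m + j) x)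
          + (c * (((m + 1).choose 0 : ℕ) : ℂ) * ff a 0 * ff b (m + 1 - 0))
            * W (a - (0 : ℕ)) (b - (m + 1 : ℕ) + (0 : ℕ)) x := by
      rw [Finset.sum_range_succ' (fun j =>
        (c * (m.choose j : ℂ) * ff a j * ff b (m - j + 1)) * W (a - j) (b - m + j - 1) x) m]
      congr 1
      · rw [Finset.sum_range_succ (fun j =>
          (c * (m.choose (j + 1) : ℂ) * ff a (j + 1) * ff b (m - j)) * W (a - j - 1) (b - m + j) x) m]
        rw [Nat.choose_succ_self]
        push_cast
        rw [mul_zero, zero_mul, zero_mul, zero_mul, add_zero]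
        apply Finset.sum_congr rfl
        intro j hj
        have hj' : j < m := Finset.mem_range.mp hj
        have h1 : m - (j + 1) + 1 = m - j := by omega
        have h2 : (a - ((j : ℤ) + 1)) = a - j - 1 := by ring
        have h3 : (b - (m : ℤ) + ((j : ℤ) + 1) - 1) = b - m + j := by ring
        rw [h1, W_congr h2 h3]
      · have h2 : (a - ((0 : ℕ) : ℤ) : ℤ) = a - (0 : ℕ) := by norm_num
        have h3 : (b - (m : ℕ) + ((0 : ℕ) : ℤ) - 1 : ℤ) = b - ((m + 1 : ℕ) : ℤ) + ((0 : ℕ) : ℤ) := by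
          push_cast; ring
        rw [W_congr h2 h3]
        norm_num
    rw [hB2]
    ring

lemma Iw_congr {a b a' b' : ℤ} (ha : a = a') (hb : b = b') : Iw a b = Iw a' b' := by
  rw [ha, hb]

lemma ff_ne_zero {a : ℤ} {M : ℕ} (h : (M : ℤ) ≤ a) : ff a M ≠ 0 := by
  rw [ff, Finset.prod_ne_zero_iff]
  intro i hi
  have hi' : i < M := Finset.mem_range.mp hi
  have : ((a - i : ℤ) : ℂ) ≠ 0 := Int.cast_ne_zero.mpr (by omega)
  push_cast at this ⊢
  exact this

lemma ntilde_odd {k : ℤ} {n : ℕ} (h : ((n : ℤ) + k) % 2 = 1) :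
    2 * ntilde k n = (n : ℤ) - k - 1 := by
  rw [ntilde, if_pos (Int.even_iff.mpr (by omega))]
  set F1 := ⌊(-(k : ℚ) - 1) / 2⌋ with hF1
  set F2 := ⌊((n : ℚ) + 1) / 2⌋ with hF2
  have b1 : (F1 : ℚ) ≤ (-(k : ℚ) - 1) / 2 := Int.floor_le _
  have b1' : (-(k : ℚ) - 1) / 2 < F1 + 1 := Int.lt_floor_add_one _
  have b2 : (F2 : ℚ) ≤ ((n : ℚ) + 1) / 2 := Int.floor_le _
  have b2' : ((n : ℚ) + 1) / 2 < F2 + 1 := Int.lt_floor_add_one _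
  have c1 : 2 * F1 ≤ -k - 1 := by exact_mod_cast (by linarith : (2 * F1 : ℚ) ≤ -(k : ℚ) - 1)
  have c1' : -k - 1 < 2 * F1 + 2 := by
    exact_mod_cast (by linarith : (-(k : ℚ) - 1 : ℚ) < 2 * F1 + 2)
  have c2 : 2 * F2 ≤ (n : ℤ) + 1 := by exact_mod_cast (by linarith : (2 * F2 : ℚ) ≤ (n : ℚ) + 1)
  have c2' : (n : ℤ) + 1 < 2 * F2 + 2 := by
    exact_mod_cast (by linarith : ((n : ℚ) + 1 : ℚ) < 2 * F2 + 2)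
  omega

lemma ntilde_even {k : ℤ} {n : ℕ} (h : ((n : ℤ) + k) % 2 = 0) :
    2 * ntilde k n = -((n : ℤ) + k + 2) := by
  rw [ntilde, if_neg (by rw [Int.even_iff]; omega)]
  set F1 := ⌊(-(k : ℚ) - 1) / 2⌋ with hF1
  set F2 := ⌊((n : ℚ) + 1) / 2⌋ with hF2
  have b1 : (F1 : ℚ) ≤ (-(k : ℚ) - 1) / 2 := Int.floor_le _
  have b1' : (-(k : ℚ) - 1) / 2 < F1 + 1 := Int.lt_floor_add_one _
  have b2 : (F2 : ℚ) ≤ ((n : ℚ) + 1) / 2 := Int.floor_le _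
  have b2' : ((n : ℚ) + 1) / 2 < F2 + 1 := Int.lt_floor_add_one _
  have c1 : 2 * F1 ≤ -k - 1 := by exact_mod_cast (by linarith : (2 * F1 : ℚ) ≤ -(k : ℚ) - 1)
  have c1' : -k - 1 < 2 * F1 + 2 := by
    exact_mod_cast (by linarith : (-(k : ℚ) - 1 : ℚ) < 2 * F1 + 2)
  have c2 : 2 * F2 ≤ (n : ℤ) + 1 := by exact_mod_cast (by linarith : (2 * F2 : ℚ) ≤ (n : ℚ) + 1)
  have c2' : (n : ℤ) + 1 < 2 * F2 + 2 := by
    exact_mod_cast (by linarith : ((n : ℚ) + 1 : ℚ) < 2 * F2 + 2)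
  omega

lemma xpow_mul_W (d : ℕ) (a b : ℤ) (x : ℝ) :
    ((x : ℂ)) ^ d * W a b x = ∑ t ∈ Finset.range (d + 1),
      (2 : ℂ) ^ (-(d : ℤ)) * (d.choose t : ℂ) * W (a + t) (b + (d - t : ℕ)) x := by
  have key : ((2 : ℂ) * x) ^ d = ∑ t ∈ Finset.range (d + 1),
      ((x : ℂ) + Complex.I) ^ t * ((x : ℂ) - Complex.I) ^ (d - t) * (d.choose t : ℂ) := by
    rw [← add_pow]
    congr 1
    ring
  have h2 : ((x : ℂ)) ^ d = (2 : ℂ) ^ (-(d : ℤ)) * ((2 : ℂ) * x) ^ d := by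
    have h3 : (2 : ℂ) ^ (-(d : ℤ)) * (2 : ℂ) ^ (d : ℤ) = 1 := by
      rw [← zpow_add₀ (by norm_num : (2 : ℂ) ≠ 0)]
      simp
    rw [mul_pow, ← mul_assoc, ← zpow_natCast (2 : ℂ) d, h3, one_mul]
  rw [h2, mul_assoc, key, Finset.sum_mul, Finset.mul_sum]
  apply Finset.sum_congr rfl
  intro t ht
  simp only [W, zpow_add₀ (u_ne x), zpow_add₀ (v_ne x), zpow_natCast]
  ring

lemma integrand_expand (M : ℕ) (p : ℕ → Polynomial ℂ) (k₀ kd : ℤ) (mm n : ℕ) (x : ℝ) :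
    Pop M p (ebasis k₀ n) x * (starRingEnd ℂ) (ebasis kd mm x) * (((x ^ 2 + 1) ^ kd : ℝ) : ℂ)
    = ∑ m ∈ Finset.range (M + 1), ∑ d ∈ Finset.range ((p m).natDegree + 1),
        ∑ j ∈ Finset.range (m + 1), ∑ t ∈ Finset.range (d + 1),
        ((((Real.sqrt Real.pi)⁻¹ : ℝ) : ℂ) ^ 2 * (p m).coeff d * (2 : ℂ) ^ (-(d : ℤ))
          * (d.choose t : ℂ) * (m.choose j : ℂ) * ff (-(k₀ + 1) - ntilde k₀ n) j
          * ff (ntilde k₀ n) (m - j))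
          * W ((-(k₀ + 1) - ntilde k₀ n) - j + t + ntilde kd mm + kd)
              ((ntilde k₀ n) - m + j + (d - t : ℕ) - 1 - ntilde kd mm) x := by
  set N := ntilde k₀ n with hN
  set B := ntilde kd mm with hB
  set A0 := -(k₀ + 1) - N with hA0
  set cst : ℂ := (((Real.sqrt Real.pi)⁻¹ : ℝ) : ℂ) with hcst
  have hconj : (starRingEnd ℂ) (ebasis kd mm x) = cst * W B (-(kd + 1) - B) x := by
    rw [ebasis_eq kd mm]
    simp only [map_mul, W_conj]
    congr 1
    exact Complex.conj_ofReal _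
  rw [hconj, weight_eq, Pop, Finset.sum_mul, Finset.sum_mul]
  apply Finset.sum_congr rfl
  intro m hm
  rw [ebasis_eq k₀ n, iter_deriv_W, Polynomial.eval_eq_sum_range]
  rw [Finset.sum_mul, Finset.sum_mul, Finset.sum_mul]
  apply Finset.sum_congr rfl
  intro d hd
  rw [Finset.mul_sum, Finset.sum_mul, Finset.sum_mul]
  apply Finset.sum_congr rfl
  intro j hj
  have hre : (p m).coeff d * (x : ℂ) ^ d
        * ((cst * (m.choose j : ℂ) * ff A0 j * ff N (m - j)) * W (A0 - j) (N - m + j) x)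
        * (cst * W B (-(kd + 1) - B) x) * W kd kd x
      = ((p m).coeff d * (cst * (m.choose j : ℂ) * ff A0 j * ff N (m - j)) * cst
          * (W B (-(kd + 1) - B) x * W kd kd x))
        * ((x : ℂ) ^ d * W (A0 - j) (N - m + j) x) := by
    ring
  rw [hre, xpow_mul_W, Finset.mul_sum]
  apply Finset.sum_congr rfl
  intro t ht
  have hWW : W B (-(kd + 1) - B) x * W kd kd x * W (A0 - j + t) (N - m + j + (d - t : ℕ)) x
      = W (A0 - j + t + B + kd) (N - m + j + (d - t : ℕ) - 1 - B) x := by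
    rw [W_mul, W_mul]
    exact W_congr (by ring) (by ring) x
  rw [← hWW]
  ring

lemma bmat_eq (M : ℕ) (p : ℕ → Polynomial ℂ) (k₀ kd : ℤ) (mm n : ℕ)
    (hdeg : ∀ m, m ≤ M → ((p m).natDegree : ℤ) ≤ (m : ℤ) + (k₀ - kd)) :
    bmat M p k₀ kd mm n
    = ∑ m ∈ Finset.range (M + 1), ∑ d ∈ Finset.range ((p m).natDegree + 1),
        ∑ j ∈ Finset.range (m + 1), ∑ t ∈ Finset.range (d + 1),
        ((((Real.sqrt Real.pi)⁻¹ : ℝ) : ℂ) ^ 2 * (p m).coeff d * (2 : ℂ) ^ (-(d : ℤ))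
          * (d.choose t : ℂ) * (m.choose j : ℂ) * ff (-(k₀ + 1) - ntilde k₀ n) j
          * ff (ntilde k₀ n) (m - j))
          * Iw ((-(k₀ + 1) - ntilde k₀ n) - j + t + ntilde kd mm + kd)
              ((ntilde k₀ n) - m + j + (d - t : ℕ) - 1 - ntilde kd mm) := by
  have hab : ∀ m d j t : ℕ, m ≤ M → d ≤ (p m).natDegree → t ≤ d →
      ((-(k₀ + 1) - ntilde k₀ n) - j + t + ntilde kd mm + kd)
        + ((ntilde k₀ n) - m + j + ((d - t : ℕ) : ℤ) - 1 - ntilde kd mm) ≤ -2 := by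
    intro m d j t hm hd ht
    have hc : ((d - t : ℕ) : ℤ) = (d : ℤ) - t := by
      rw [Nat.cast_sub ht]
    have h2 := hdeg m hm
    have h3 : (d : ℤ) ≤ ((p m).natDegree : ℤ) := by exact_mod_cast hd
    omega
  rw [bmat]
  simp_rw [integrand_expand M p k₀ kd mm n]
  rw [MeasureTheory.integral_finset_sum _ (fun m hm => MeasureTheory.integrable_finset_sum _
    (fun d hd => MeasureTheory.integrable_finset_sum _ (fun j hj =>
      MeasureTheory.integrable_finset_sum _ (fun t ht =>
        (W_integrable (hab m d j t (by simpa [Nat.lt_succ_iff] using hm)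
          (by simpa [Nat.lt_succ_iff] using hd)
          (by simpa [Nat.lt_succ_iff] using ht))).const_mul _))))]
  apply Finset.sum_congr rfl
  intro m hm
  rw [MeasureTheory.integral_finset_sum _ (fun d hd => MeasureTheory.integrable_finset_sum _
    (fun j hj => MeasureTheory.integrable_finset_sum _ (fun t ht =>
      (W_integrable (hab m d j t (by simpa [Nat.lt_succ_iff] using hm)
        (by simpa [Nat.lt_succ_iff] using hd)
        (by simpa [Nat.lt_succ_iff] using ht))).const_mul _)))]
  apply Finset.sum_congr rfl
  intro d hd
  rw [MeasureTheory.integral_finset_sum _ (fun j hj => MeasureTheory.integrable_finset_sum _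
    (fun t ht => (W_integrable (hab m d j t (by simpa [Nat.lt_succ_iff] using hm)
      (by simpa [Nat.lt_succ_iff] using hd)
      (by simpa [Nat.lt_succ_iff] using ht))).const_mul _))]
  apply Finset.sum_congr rfl
  intro j hj
  rw [MeasureTheory.integral_finset_sum _ (fun t ht =>
    (W_integrable (hab m d j t (by simpa [Nat.lt_succ_iff] using hm)
      (by simpa [Nat.lt_succ_iff] using hd)
      (by simpa [Nat.lt_succ_iff] using ht))).const_mul _)]
  apply Finset.sum_congr rfl
  intro t ht
  rw [integral_const_mul, Iw]

lemma pow_helper_A (d : ℕ) (E : ℤ) :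
    (2 : ℂ) ^ (-(d : ℤ)) * (2 * Complex.I) ^ ((d : ℤ) - 1 - E + 1)
      = Complex.I ^ d * (2 * Complex.I) ^ (-E) := by
  have h1 : (2 : ℂ) ^ (-(d : ℤ)) * (2 : ℂ) ^ (d : ℤ) = 1 := by
    rw [← zpow_add₀ (by norm_num : (2 : ℂ) ≠ 0)]
    simp
  calc (2 : ℂ) ^ (-(d : ℤ)) * (2 * Complex.I) ^ ((d : ℤ) - 1 - E + 1)
      = ((2 : ℂ) ^ (-(d : ℤ)) * (2 : ℂ) ^ (d : ℤ)) * (Complex.I ^ d * (2 * Complex.I) ^ (-E)) := by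
        rw [show (d : ℤ) - 1 - E + 1 = (d : ℤ) + (-E) by ring, zpow_add₀ two_I_ne,
          zpow_natCast, mul_pow, ← zpow_natCast (2 : ℂ) d]
        ring
    _ = Complex.I ^ d * (2 * Complex.I) ^ (-E) := by rw [h1, one_mul]

lemma pow_helper_B (d : ℕ) (E : ℤ) :
    (2 : ℂ) ^ (-(d : ℤ)) * (-(2 * Complex.I)) ^ ((d : ℤ) - 1 - E + 1)
      = (-Complex.I) ^ d * (-(2 * Complex.I)) ^ (-E) := by
  have h1 : (2 : ℂ) ^ (-(d : ℤ)) * (2 : ℂ) ^ (d : ℤ) = 1 := by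
    rw [← zpow_add₀ (by norm_num : (2 : ℂ) ≠ 0)]
    simp
  calc (2 : ℂ) ^ (-(d : ℤ)) * (-(2 * Complex.I)) ^ ((d : ℤ) - 1 - E + 1)
      = ((2 : ℂ) ^ (-(d : ℤ)) * (2 : ℂ) ^ (d : ℤ))
          * (((-1 : ℂ)) ^ d * Complex.I ^ d * (-(2 * Complex.I)) ^ (-E)) := by
        rw [show (d : ℤ) - 1 - E + 1 = (d : ℤ) + (-E) by ring,
          zpow_add₀ (neg_ne_zero.mpr two_I_ne), zpow_natCast, neg_pow, mul_pow,
          ← zpow_natCast (2 : ℂ) d]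
        ring
    _ = (-Complex.I) ^ d * (-(2 * Complex.I)) ^ (-E) := by rw [h1, one_mul, neg_pow]; ring
/-- In the band-matrix setup (polynomial coefficients `p_0, …, p_M`
with `p_M ≠ 0`, integer `k₀ ≥ 0` and `k₀◊ ≤ k₀ - s₀`), assume moreover that
`p_M(i) ≠ 0` and `p_M(-i) ≠ 0`.  Then `b_{r-(2M+k₀-k₀◊)}^{r} ≠ 0` for every
`r ≥ 2M + k₀ + max (-k₀◊) 0`. -/
theorem stmt12 (M : ℕ) (hM : 1 ≤ M) (p : ℕ → Polynomial ℂ) (hpM : p M ≠ 0)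
    (k₀ : ℤ) (hk₀ : 0 ≤ k₀) (kd : ℤ) (hkd : kd ≤ k₀ - s0 M p)
    (hpI : (p M).eval Complex.I ≠ 0) (hpI' : (p M).eval (-Complex.I) ≠ 0) :
    ∀ r : ℕ, 2 * (M : ℤ) + k₀ + max (-kd) 0 ≤ (r : ℤ) →
      bmat M p k₀ kd ((r : ℤ) - (2 * (M : ℤ) + k₀ - kd)).toNat r ≠ 0 := by
  intro r hr
  have hmax1 : -kd ≤ max (-kd) 0 := le_max_left _ _
  have hmax2 : (0 : ℤ) ≤ max (-kd) 0 := le_max_right _ _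
  have hdeg : ∀ m, m ≤ M → ((p m).natDegree : ℤ) ≤ (m : ℤ) + (k₀ - kd) := by
    intro m hm
    have h1 : ((p m).natDegree : ℤ) - (m : ℤ) ≤ s0 M p :=
      Finset.le_sup' (fun m => ((p m).natDegree : ℤ) - (m : ℤ)) (Finset.mem_range.mpr (by omega))
    omega
  rw [bmat_eq M p k₀ kd _ r hdeg]
  have hm' : ((((r : ℤ) - (2 * (M : ℤ) + k₀ - kd)).toNat : ℕ) : ℤ)
      = (r : ℤ) - (2 * (M : ℤ) + k₀ - kd) := Int.toNat_of_nonneg (by omega)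
  set m' : ℕ := ((r : ℤ) - (2 * (M : ℤ) + k₀ - kd)).toNat with hm'def
  set N := ntilde k₀ r with hNdef
  set B := ntilde kd m' with hBdef
  set A0 := -(k₀ + 1) - N with hA0def
  set E : ℤ := (M : ℤ) + k₀ - kd with hEdef
  have hab : ∀ m d j t : ℕ, m ≤ M → d ≤ (p m).natDegree → t ≤ d →
      (A0 - j + t + B + kd) + (N - m + j + ((d - t : ℕ) : ℤ) - 1 - B) ≤ -2 := by
    intro m d j t hm hd ht
    have hc : ((d - t : ℕ) : ℤ) = (d : ℤ) - t := by rw [Nat.cast_sub ht]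
    have h2 := hdeg m hm
    have h3 : (d : ℤ) ≤ ((p m).natDegree : ℤ) := by exact_mod_cast hd
    omega
  rcases Int.emod_two_eq_zero_or_one ((r : ℤ) + k₀) with hpar | hpar
  · -- even case : surviving term (m, j, t) = (M, M, 0)
    have hN2 : 2 * ntilde k₀ r = -((r : ℤ) + k₀ + 2) := ntilde_even hpar
    have hB2 : 2 * ntilde kd m' = -((m' : ℤ) + kd + 2) := ntilde_even (by omega)
    have hBN : B = N + M + (k₀ - kd) := by omega
    have hA0M : (M : ℤ) ≤ A0 := by omega
    have hzero : ∀ m ∈ Finset.range (M + 1), ∀ d ∈ Finset.range ((p m).natDegree + 1),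
        ∀ j ∈ Finset.range (m + 1), ∀ t ∈ Finset.range (d + 1), ¬(m = M ∧ j = M ∧ t = 0) →
        ((((Real.sqrt Real.pi)⁻¹ : ℝ) : ℂ) ^ 2 * (p m).coeff d * (2 : ℂ) ^ (-(d : ℤ))
          * (d.choose t : ℂ) * (m.choose j : ℂ) * ff A0 j * ff N (m - j))
          * Iw (A0 - j + t + B + kd) (N - m + j + (d - t : ℕ) - 1 - B) = 0 := by
      intro m hm d hd j hj t ht hns
      have hm1 : m ≤ M := by simpa [Nat.lt_succ_iff] using hm
      have hd1 : d ≤ (p m).natDegree := by simpa [Nat.lt_succ_iff] using hd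
      have hj1 : j ≤ m := by simpa [Nat.lt_succ_iff] using hj
      have ht1 : t ≤ d := by simpa [Nat.lt_succ_iff] using ht
      rw [Iw_vanish (hab m d j t hm1 hd1 ht1) (Or.inl (by omega)), mul_zero]
    rw [Finset.sum_eq_single_of_mem M (Finset.self_mem_range_succ M)
      (fun m hm hne => Finset.sum_eq_zero (fun d hd => Finset.sum_eq_zero (fun j hj =>
        Finset.sum_eq_zero (fun t ht => hzero m hm d hd j hj t ht (fun hc => hne hc.1)))))]
    have hstep : ∀ d ∈ Finset.range ((p M).natDegree + 1),
        (∑ j ∈ Finset.range (M + 1), ∑ t ∈ Finset.range (d + 1),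
          ((((Real.sqrt Real.pi)⁻¹ : ℝ) : ℂ) ^ 2 * (p M).coeff d * (2 : ℂ) ^ (-(d : ℤ))
            * (d.choose t : ℂ) * (M.choose j : ℂ) * ff A0 j * ff N (M - j))
            * Iw (A0 - j + t + B + kd) (N - M + j + (d - t : ℕ) - 1 - B))
        = ((((Real.sqrt Real.pi)⁻¹ : ℝ) : ℂ) ^ 2 * (Real.pi : ℂ) * ff A0 M
            * (-(2 * Complex.I)) ^ (-E)) * ((p M).coeff d * (-Complex.I) ^ d) := by
      intro d hd
      rw [Finset.sum_eq_single_of_mem M (Finset.self_mem_range_succ M)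
        (fun j hj hne => Finset.sum_eq_zero (fun t ht =>
          hzero M (Finset.self_mem_range_succ M) d hd j hj t ht (fun hc => hne hc.2.1)))]
      rw [Finset.sum_eq_single_of_mem 0 (Finset.mem_range.mpr (Nat.succ_pos d))
        (fun t ht hne => hzero M (Finset.self_mem_range_succ M) d hd M
          (Finset.self_mem_range_succ M) t ht (fun hc => hne hc.2.2))]
      have hd' : (d : ℤ) ≤ E := by
        have h2 := hdeg M le_rfl
        have h3 : (d : ℤ) ≤ ((p M).natDegree : ℤ) := by
          exact_mod_cast Nat.lt_succ_iff.mp (Finset.mem_range.mp hd)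
        omega
      rw [Iw_congr (show A0 - (M : ℕ) + ((0 : ℕ) : ℤ) + B + kd = -1 by push_cast; omega)
        (show N - (M : ℕ) + (M : ℕ) + ((d - 0 : ℕ) : ℤ) - 1 - B = (d : ℤ) - 1 - E by
          rw [Nat.sub_zero]; push_cast; omega)]
      rw [Iw_eval_B (show (d : ℤ) - 1 - E ≤ -1 by omega)]
      rw [Nat.choose_self, Nat.choose_zero_right, Nat.sub_self, ff_zero]
      push_cast
      linear_combination ((((Real.sqrt Real.pi : ℝ) : ℂ))⁻¹ ^ 2 * (p M).coeff d * ff A0 M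
        * (Real.pi : ℂ)) * pow_helper_B d E
    rw [Finset.sum_congr rfl hstep, ← Finset.mul_sum, ← Polynomial.eval_eq_sum_range]
    exact mul_ne_zero (mul_ne_zero (mul_ne_zero (mul_ne_zero
      (pow_ne_zero 2 (Complex.ofReal_ne_zero.mpr
        (inv_ne_zero (Real.sqrt_ne_zero'.mpr Real.pi_pos))))
      (Complex.ofReal_ne_zero.mpr Real.pi_ne_zero))
      (ff_ne_zero hA0M)) (zpow_ne_zero _ (neg_ne_zero.mpr two_I_ne))) hpI'
  · -- odd case : surviving term (m, j, t) = (M, 0, d)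
    have hN2 : 2 * ntilde k₀ r = (r : ℤ) - k₀ - 1 := ntilde_odd hpar
    have hB2 : 2 * ntilde kd m' = (m' : ℤ) - kd - 1 := ntilde_odd (by omega)
    have hBN : B = N - M := by omega
    have hNM : (M : ℤ) ≤ N := by omega
    have hzero : ∀ m ∈ Finset.range (M + 1), ∀ d ∈ Finset.range ((p m).natDegree + 1),
        ∀ j ∈ Finset.range (m + 1), ∀ t ∈ Finset.range (d + 1), ¬(m = M ∧ j = 0 ∧ t = d) →
        ((((Real.sqrt Real.pi)⁻¹ : ℝ) : ℂ) ^ 2 * (p m).coeff d * (2 : ℂ) ^ (-(d : ℤ))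
          * (d.choose t : ℂ) * (m.choose j : ℂ) * ff A0 j * ff N (m - j))
          * Iw (A0 - j + t + B + kd) (N - m + j + (d - t : ℕ) - 1 - B) = 0 := by
      intro m hm d hd j hj t ht hns
      have hm1 : m ≤ M := by simpa [Nat.lt_succ_iff] using hm
      have hd1 : d ≤ (p m).natDegree := by simpa [Nat.lt_succ_iff] using hd
      have hj1 : j ≤ m := by simpa [Nat.lt_succ_iff] using hj
      have ht1 : t ≤ d := by simpa [Nat.lt_succ_iff] using ht
      have hc : ((d - t : ℕ) : ℤ) = (d : ℤ) - t := by rw [Nat.cast_sub ht1]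
      rw [Iw_vanish (hab m d j t hm1 hd1 ht1) (Or.inr (by omega)), mul_zero]
    rw [Finset.sum_eq_single_of_mem M (Finset.self_mem_range_succ M)
      (fun m hm hne => Finset.sum_eq_zero (fun d hd => Finset.sum_eq_zero (fun j hj =>
        Finset.sum_eq_zero (fun t ht => hzero m hm d hd j hj t ht (fun hc => hne hc.1)))))]
    have hstep : ∀ d ∈ Finset.range ((p M).natDegree + 1),
        (∑ j ∈ Finset.range (M + 1), ∑ t ∈ Finset.range (d + 1),
          ((((Real.sqrt Real.pi)⁻¹ : ℝ) : ℂ) ^ 2 * (p M).coeff d * (2 : ℂ) ^ (-(d : ℤ))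
            * (d.choose t : ℂ) * (M.choose j : ℂ) * ff A0 j * ff N (M - j))
            * Iw (A0 - j + t + B + kd) (N - M + j + (d - t : ℕ) - 1 - B))
        = ((((Real.sqrt Real.pi)⁻¹ : ℝ) : ℂ) ^ 2 * (Real.pi : ℂ) * ff N M
            * (2 * Complex.I) ^ (-E)) * ((p M).coeff d * Complex.I ^ d) := by
      intro d hd
      rw [Finset.sum_eq_single_of_mem 0 (Finset.mem_range.mpr (Nat.succ_pos M))
        (fun j hj hne => Finset.sum_eq_zero (fun t ht =>
          hzero M (Finset.self_mem_range_succ M) d hd j hj t ht (fun hc => hne hc.2.1)))]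
      rw [Finset.sum_eq_single_of_mem d (Finset.self_mem_range_succ d)
        (fun t ht hne => hzero M (Finset.self_mem_range_succ M) d hd 0
          (Finset.mem_range.mpr (Nat.succ_pos M)) t ht (fun hc => hne hc.2.2))]
      have hd' : (d : ℤ) ≤ E := by
        have h2 := hdeg M le_rfl
        have h3 : (d : ℤ) ≤ ((p M).natDegree : ℤ) := by
          exact_mod_cast Nat.lt_succ_iff.mp (Finset.mem_range.mp hd)
        omega
      rw [Iw_congr (show A0 - ((0 : ℕ) : ℤ) + (d : ℕ) + B + kd = (d : ℤ) - 1 - E by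
          push_cast; omega)
        (show N - (M : ℕ) + ((0 : ℕ) : ℤ) + ((d - d : ℕ) : ℤ) - 1 - B = -1 by
          rw [Nat.sub_self]; push_cast; omega)]
      rw [Iw_eval_A (show (d : ℤ) - 1 - E ≤ -1 by omega)]
      rw [Nat.choose_self, Nat.choose_zero_right, Nat.sub_zero, ff_zero]
      push_cast
      linear_combination ((((Real.sqrt Real.pi : ℝ) : ℂ))⁻¹ ^ 2 * (p M).coeff d * ff N M
        * (Real.pi : ℂ)) * pow_helper_A d E
    rw [Finset.sum_congr rfl hstep, ← Finset.mul_sum, ← Polynomial.eval_eq_sum_range]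
    exact mul_ne_zero (mul_ne_zero (mul_ne_zero (mul_ne_zero
      (pow_ne_zero 2 (Complex.ofReal_ne_zero.mpr
        (inv_ne_zero (Real.sqrt_ne_zero'.mpr Real.pi_pos))))
      (Complex.ofReal_ne_zero.mpr Real.pi_ne_zero))
      (ff_ne_zero hNM)) (zpow_ne_zero _ two_I_ne)) hpI
end

section
/- With the notation of the band-matrix setup: b_m^n = 0 whenever m ≤ k₀◊ − 1 and n ≥ k₀. -/
open MeasureTheory

/-! ### Auxiliary machinery -/

namespace Stmt13Aux

open Complex Filter Set

/-- Membership in the span of `(x - c)^j`, `j ≤ d`. -/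
def InT (c : ℂ) (d : ℤ) (f : ℝ → ℂ) : Prop :=
  ∃ (s : Finset ℤ) (a : ℤ → ℂ), (∀ j ∈ s, j ≤ d) ∧
    f = fun x : ℝ => ∑ j ∈ s, a j * ((x : ℂ) - c) ^ j

variable {c : ℂ} {d d₁ d₂ : ℤ} {f g : ℝ → ℂ}

lemma pole_sub_ne (hc : c = Complex.I ∨ c = -Complex.I) (x : ℝ) : (x : ℂ) - c ≠ 0 := by
  intro h
  have := congrArg Complex.im h
  rcases hc with rfl | rfl <;> simp at this

lemma pole_normSq (hc : c = Complex.I ∨ c = -Complex.I) (x : ℝ) :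
    ‖(x : ℂ) - c‖ ^ 2 = x ^ 2 + 1 := by
  rcases hc with rfl | rfl <;>
    · rw [Complex.sq_norm, Complex.normSq_apply]
      simp
      ring

lemma InT.congr (h : f = g) (hf : InT c d f) : InT c d g := h ▸ hf

lemma InT.mono (h : d₁ ≤ d₂) (hf : InT c d₁ f) : InT c d₂ f := by
  obtain ⟨s, a, hs, rfl⟩ := hf
  exact ⟨s, a, fun j hj => le_trans (hs j hj) h, rfl⟩

lemma InT.zero : InT c d (fun _ : ℝ => (0 : ℂ)) :=
  ⟨∅, fun _ => 0, by simp, by simp⟩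

lemma InT.single (j : ℤ) (hj : j ≤ d) : InT c d (fun x : ℝ => ((x : ℂ) - c) ^ j) :=
  ⟨{j}, fun _ => 1, by simpa using hj, by simp⟩

lemma InT.add (hf : InT c d f) (hg : InT c d g) : InT c d (fun x => f x + g x) := by
  obtain ⟨s, a, hs, rfl⟩ := hf
  obtain ⟨t, b, ht, rfl⟩ := hg
  refine ⟨s ∪ t, fun j => (if j ∈ s then a j else 0) + (if j ∈ t then b j else 0), ?_, ?_⟩
  · intro j hj
    rcases Finset.mem_union.1 hj with h | h
    · exact hs j h
    · exact ht j h
  · funext x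
    simp only [add_mul, Finset.sum_add_distrib]
    congr 1
    · calc ∑ j ∈ s, a j * ((x:ℂ) - c) ^ j
          = ∑ j ∈ s, (if j ∈ s then a j else 0) * ((x:ℂ) - c) ^ j :=
            Finset.sum_congr rfl fun j hj => by simp [hj]
        _ = _ := Finset.sum_subset Finset.subset_union_left (fun j _ hj => by simp [hj])
    · calc ∑ j ∈ t, b j * ((x:ℂ) - c) ^ j
          = ∑ j ∈ t, (if j ∈ t then b j else 0) * ((x:ℂ) - c) ^ j :=
            Finset.sum_congr rfl fun j hj => by simp [hj]
        _ = _ := Finset.sum_subset Finset.subset_union_right (fun j _ hj => by simp [hj])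

lemma InT.const_mul (z : ℂ) (hf : InT c d f) : InT c d (fun x => z * f x) := by
  obtain ⟨s, a, hs, rfl⟩ := hf
  refine ⟨s, fun j => z * a j, hs, ?_⟩
  funext x
  rw [Finset.mul_sum]
  exact Finset.sum_congr rfl fun j _ => by ring

lemma InT.finsum {ι : Type*} (t : Finset ι) (F : ι → ℝ → ℂ)
    (h : ∀ i ∈ t, InT c d (F i)) : InT c d (fun x => ∑ i ∈ t, F i x) := by
  classical
  induction t using Finset.induction_on with
  | empty => simpa using (InT.zero : InT c d _)
  | @insert i t' hnot ih =>
    have h1 : InT c d (F i) := h i (Finset.mem_insert_self i t')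
    have h2 : InT c d (fun x => ∑ j ∈ t', F j x) :=
      ih fun j hj => h j (Finset.mem_insert_of_mem hj)
    exact (h1.add h2).congr (by funext x; rw [Finset.sum_insert hnot])

lemma InT.mul_single (j : ℤ) (hne : ∀ y : ℝ, (y : ℂ) - c ≠ 0) (hf : InT c d f) :
    InT c (d + j) (fun x => ((x : ℂ) - c) ^ j * f x) := by
  obtain ⟨s, a, hs, rfl⟩ := hf
  refine ⟨s.image (· + j), fun u => a (u - j), ?_, ?_⟩
  · intro u hu
    obtain ⟨t, ht, rfl⟩ := Finset.mem_image.1 hu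
    have := hs t ht; omega
  · funext x
    rw [Finset.sum_image (by intro u _ v _ h; exact add_right_cancel h)]
    rw [Finset.mul_sum]
    refine Finset.sum_congr rfl fun t ht => ?_
    have h0 : t + j - j = t := by ring
    simp only [h0]
    rw [zpow_add₀ (hne x) t j]
    ring

lemma InT.mul (hne : ∀ y : ℝ, (y : ℂ) - c ≠ 0) (hf : InT c d₁ f) (hg : InT c d₂ g) :
    InT c (d₁ + d₂) (fun x => f x * g x) := by
  obtain ⟨s, a, hs, rfl⟩ := hf
  have : (fun x : ℝ => (∑ j ∈ s, a j * ((x : ℂ) - c) ^ j) * g x)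
      = fun x : ℝ => ∑ j ∈ s, a j * (((x : ℂ) - c) ^ j * g x) := by
    funext x; rw [Finset.sum_mul]; exact Finset.sum_congr rfl fun j _ => by ring
  refine InT.congr this.symm ?_
  refine InT.finsum s _ fun j hj => ?_
  have h1 : InT c (d₂ + j) (fun x => ((x : ℂ) - c) ^ j * g x) := hg.mul_single j hne
  exact ((h1.mono (by have := hs j hj; omega)).const_mul (a j))

lemma vfun_hasDerivAt (hne : ∀ y : ℝ, (y : ℂ) - c ≠ 0) (j : ℤ) (x : ℝ) :
    HasDerivAt (fun y : ℝ => ((y : ℂ) - c) ^ j) ((j : ℂ) * ((x : ℂ) - c) ^ (j - 1)) x := by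
  have h1 : HasDerivAt (fun z : ℂ => (z - c) ^ j) ((j : ℂ) * ((x : ℂ) - c) ^ (j - 1)) (x : ℂ) := by
    have h2 := hasDerivAt_zpow j ((x : ℂ) - c) (Or.inl (hne x))
    have h3 : HasDerivAt (fun z : ℂ => z - c) 1 (x : ℂ) := (hasDerivAt_id _).sub_const c
    have h4 := h2.comp (x : ℂ) h3
    rw [mul_one] at h4
    exact h4
  simpa using h1.comp_ofReal

lemma InT.hasDerivAt (hne : ∀ y : ℝ, (y : ℂ) - c ≠ 0) (s : Finset ℤ) (a : ℤ → ℂ) (x : ℝ) :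
    HasDerivAt (fun x : ℝ => ∑ j ∈ s, a j * ((x : ℂ) - c) ^ j)
      (∑ j ∈ s, a j * ((j : ℂ) * ((x : ℂ) - c) ^ (j - 1))) x :=
  HasDerivAt.fun_sum fun j _ => (vfun_hasDerivAt hne j x).const_mul (a j)

lemma InT.differentiable (hne : ∀ y : ℝ, (y : ℂ) - c ≠ 0) (hf : InT c d f) :
    Differentiable ℝ f := by
  obtain ⟨s, a, _, rfl⟩ := hf
  exact fun x => (InT.hasDerivAt hne s a x).differentiableAt

lemma InT.deriv (hne : ∀ y : ℝ, (y : ℂ) - c ≠ 0) (hf : InT c d f) :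
    InT c (d - 1) (_root_.deriv f) := by
  obtain ⟨s, a, hs, rfl⟩ := hf
  refine ⟨s.image (· - 1), fun u => a (u + 1) * ((u : ℂ) + 1), ?_, ?_⟩
  · intro u hu
    obtain ⟨t, ht, rfl⟩ := Finset.mem_image.1 hu
    have := hs t ht; omega
  · funext x
    rw [(InT.hasDerivAt hne s a x).deriv]
    rw [Finset.sum_image (by intro u _ v _ h; exact sub_left_inj.mp h)]
    refine Finset.sum_congr rfl fun j _ => ?_
    have h1 : (j - 1 + 1 : ℤ) = j := by ring
    simp only [h1]
    push_cast
    ring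

lemma InT.iterDeriv (hne : ∀ y : ℝ, (y : ℂ) - c ≠ 0) (m : ℕ) (hf : InT c d f) :
    InT c (d - m) (_root_.deriv^[m] f) := by
  induction m generalizing f d with
  | zero => simpa using hf
  | succ m ih =>
    rw [Function.iterate_succ_apply]
    have := ih (hf.deriv hne)
    exact this.mono (by push_cast; omega)

/-! ### Integrability and vanishing integrals -/

lemma vfun_integrable (hc : c = Complex.I ∨ c = -Complex.I) (j : ℤ) (hj : j ≤ -2) :
    Integrable (fun x : ℝ => ((x : ℂ) - c) ^ j) := by
  have hne := pole_sub_ne hc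
  have hcont : Continuous (fun x : ℝ => ((x : ℂ) - c) ^ j) := by
    have : Differentiable ℝ (fun x : ℝ => ((x : ℂ) - c) ^ j) :=
      fun x => (vfun_hasDerivAt hne j x).differentiableAt
    exact this.continuous
  refine Integrable.mono' integrable_inv_one_add_sq hcont.aestronglyMeasurable
    (Filter.Eventually.of_forall fun x => ?_)
  have h1 : (1 : ℝ) ≤ ‖(x : ℂ) - c‖ := by
    have := pole_normSq hc x
    nlinarith [norm_nonneg ((x : ℂ) - c)]
  have h2 : ‖((x : ℂ) - c) ^ j‖ = ‖(x : ℂ) - c‖ ^ j := norm_zpow _ _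
  have h3 : ‖(x : ℂ) - c‖ ^ j ≤ ‖(x : ℂ) - c‖ ^ (-2 : ℤ) := zpow_le_zpow_right₀ h1 hj
  have h4 : ‖(x : ℂ) - c‖ ^ (-2 : ℤ) = (1 + x ^ 2)⁻¹ := by
    rw [zpow_neg, show ((2:ℤ) = ((2:ℕ):ℤ)) from rfl, zpow_natCast, pole_normSq hc x]
    ring_nf
  rw [h2]
  calc ‖(x : ℂ) - c‖ ^ j ≤ ‖(x : ℂ) - c‖ ^ (-2 : ℤ) := h3
    _ = (1 + x ^ 2)⁻¹ := h4

lemma norm_c (hc : c = Complex.I ∨ c = -Complex.I) : ‖c‖ = 1 := by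
  rcases hc with rfl | rfl <;> simp

lemma norm_lower (hc : c = Complex.I ∨ c = -Complex.I) (x : ℝ) :
    |x| - 1 ≤ ‖(x : ℂ) - c‖ := by
  have h1 : ‖(x : ℂ)‖ - ‖c‖ ≤ ‖(x : ℂ) - c‖ := norm_sub_norm_le _ _
  rw [norm_c hc] at h1
  simpa [Real.norm_eq_abs] using h1

lemma norm_tendsto_atTop (hc : c = Complex.I ∨ c = -Complex.I) :
    Filter.Tendsto (fun x : ℝ => ‖(x : ℂ) - c‖) Filter.atTop Filter.atTop := by
  refine Filter.tendsto_atTop_mono (fun x => ?_)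
    (Filter.tendsto_atTop_add_const_right _ (-1) Filter.tendsto_id)
  have := norm_lower hc x
  have hx : x ≤ |x| := le_abs_self x
  simp only [Filter.tendsto_id, id_eq]
  linarith

lemma norm_tendsto_atBot (hc : c = Complex.I ∨ c = -Complex.I) :
    Filter.Tendsto (fun x : ℝ => ‖(x : ℂ) - c‖) Filter.atBot Filter.atTop := by
  refine Filter.tendsto_atTop_mono (fun x => ?_)
    ((Filter.tendsto_atTop_add_const_right _ (-1)
      Filter.tendsto_neg_atBot_atTop))
  have := norm_lower hc x
  have hx : -x ≤ |x| := neg_le_abs x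
  linarith

lemma anti_tendsto (hc : c = Complex.I ∨ c = -Complex.I) (r : ℤ) (hr : r ≤ -1)
    (l : Filter ℝ) (hl : Filter.Tendsto (fun x : ℝ => ‖(x : ℂ) - c‖) l Filter.atTop) :
    Filter.Tendsto (fun x : ℝ => ((x : ℂ) - c) ^ r) l (nhds 0) := by
  rw [tendsto_zero_iff_norm_tendsto_zero]
  have h1 : Filter.Tendsto (fun y : ℝ => y ^ r) Filter.atTop (nhds (0:ℝ)) :=
    tendsto_zpow_atTop_zero (by omega)
  have h2 := h1.comp hl
  refine h2.congr fun x => ?_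
  simp [norm_zpow]

lemma vfun_integral_zero (hc : c = Complex.I ∨ c = -Complex.I) (j : ℤ) (hj : j ≤ -2) :
    ∫ x : ℝ, ((x : ℂ) - c) ^ j = 0 := by
  have hne := pole_sub_ne hc
  set A : ℝ → ℂ := fun x => ((j : ℂ) + 1)⁻¹ * ((x : ℂ) - c) ^ (j + 1) with hA
  have hj1 : ((j : ℂ) + 1) ≠ 0 := by
    have : ((j + 1 : ℤ) : ℂ) ≠ 0 := by
      rw [Int.cast_ne_zero]; omega
    push_cast at this; exact this
  have hderiv : ∀ x : ℝ, HasDerivAt A (((x : ℂ) - c) ^ j) x := by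
    intro x
    have h1 := (vfun_hasDerivAt hne (j + 1) x).const_mul (((j : ℂ) + 1)⁻¹)
    have h2 : ((j : ℂ) + 1)⁻¹ * (((j + 1 : ℤ) : ℂ) * ((x : ℂ) - c) ^ (j + 1 - 1))
        = ((x : ℂ) - c) ^ j := by
      push_cast
      rw [show j + 1 - 1 = j from by ring]
      field_simp
    rwa [h2] at h1
  have hint := vfun_integrable hc j hj
  have htop : Filter.Tendsto A Filter.atTop (nhds 0) := by
    have := (anti_tendsto hc (j + 1) (by omega) _ (norm_tendsto_atTop hc)).const_mul
      (((j : ℂ) + 1)⁻¹)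
    simpa using this
  have hbot : Filter.Tendsto A Filter.atBot (nhds 0) := by
    have := (anti_tendsto hc (j + 1) (by omega) _ (norm_tendsto_atBot hc)).const_mul
      (((j : ℂ) + 1)⁻¹)
    simpa using this
  have hIoi : ∫ x in Set.Ioi (0:ℝ), ((x : ℂ) - c) ^ j = 0 - A 0 :=
    MeasureTheory.integral_Ioi_of_hasDerivAt_of_tendsto'
      (fun x _ => hderiv x) hint.integrableOn htop
  have hIic : ∫ x in Set.Iic (0:ℝ), ((x : ℂ) - c) ^ j = A 0 - 0 :=
    MeasureTheory.integral_Iic_of_hasDerivAt_of_tendsto'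
      (fun x _ => hderiv x) hint.integrableOn hbot
  have := intervalIntegral.integral_Iic_add_Ioi (b := (0:ℝ))
    hint.integrableOn hint.integrableOn
  rw [← this, hIoi, hIic]
  ring

lemma InT.integrable (hc : c = Complex.I ∨ c = -Complex.I) (hf : InT c (-2) f) :
    Integrable f := by
  obtain ⟨s, a, hs, rfl⟩ := hf
  exact integrable_finset_sum s fun j hj =>
    ((vfun_integrable hc j (hs j hj)).const_mul (a j))

lemma InT.integral_zero (hc : c = Complex.I ∨ c = -Complex.I) (hf : InT c (-2) f) :
    ∫ x : ℝ, f x = 0 := by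
  obtain ⟨s, a, hs, rfl⟩ := hf
  rw [integral_finset_sum s fun j hj => ((vfun_integrable hc j (hs j hj)).const_mul (a j))]
  refine Finset.sum_eq_zero fun j hj => ?_
  rw [MeasureTheory.integral_const_mul, vfun_integral_zero hc j (hs j hj), mul_zero]


/-! ### Polynomials in the `InT` scale -/

lemma X_inT (c : ℂ) : InT c 1 (fun x : ℝ => (x : ℂ)) := by
  refine ⟨{0, 1}, fun j => if j = 0 then c else 1, ?_, ?_⟩
  · intro j hj
    simp only [Finset.mem_insert, Finset.mem_singleton] at hj
    rcases hj with rfl | rfl <;> norm_num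
  · funext x
    rw [Finset.sum_pair (by norm_num : (0:ℤ) ≠ 1)]
    simp

lemma const_inT (c z : ℂ) : InT c 0 (fun _ : ℝ => z) := by
  refine ⟨{0}, fun _ => z, by simp, ?_⟩
  funext x
  simp

lemma affine_inT (c w : ℂ) : InT c 1 (fun x : ℝ => (x : ℂ) + w) :=
  (X_inT c).add ((const_inT c w).mono (by omega))

lemma affine_pow_inT (hne : ∀ y : ℝ, (y : ℂ) - c ≠ 0) (w : ℂ) (n : ℕ) :
    InT c n (fun x : ℝ => ((x : ℂ) + w) ^ n) := by
  induction n with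
  | zero => exact (const_inT c 1).congr (by funext x; simp)
  | succ n ih =>
    have h1 := InT.mul hne ih (affine_inT c w)
    refine (h1.congr ?_).mono (by push_cast; omega)
    funext x
    rw [pow_succ]

lemma pow_inT (hne : ∀ y : ℝ, (y : ℂ) - c ≠ 0) (n : ℕ) :
    InT c n (fun x : ℝ => ((x : ℂ)) ^ n) :=
  (affine_pow_inT hne 0 n).congr (by funext x; simp)

lemma polyeval_inT (hne : ∀ y : ℝ, (y : ℂ) - c ≠ 0) (P : Polynomial ℂ) :
    InT c P.natDegree (fun x : ℝ => P.eval (x : ℂ)) := by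
  have h0 : (fun x : ℝ => P.eval (x : ℂ))
      = fun x : ℝ => ∑ i ∈ Finset.range (P.natDegree + 1), P.coeff i * ((x : ℂ)) ^ i := by
    funext x
    exact Polynomial.eval_eq_sum_range _
  rw [h0]
  refine InT.finsum _ _ fun i hi => ?_
  have hi' : (i : ℤ) ≤ P.natDegree := by
    have := Finset.mem_range.1 hi; omega
  exact ((pow_inT hne i).mono hi').const_mul _

lemma Pop_inT (hne : ∀ y : ℝ, (y : ℂ) - c ≠ 0) (M : ℕ) (p : ℕ → Polynomial ℂ)
    (hf : InT c d f) : InT c (d + s0 M p) (Pop M p f) := by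
  have h0 : Pop M p f = fun x : ℝ => ∑ m ∈ Finset.range (M + 1),
      (fun (m : ℕ) (x : ℝ) => (p m).eval (x : ℂ) * _root_.deriv^[m] f x) m x := rfl
  rw [h0]
  refine InT.finsum _ _ fun m hm => ?_
  have h1 := InT.mul hne (polyeval_inT hne (p m)) (hf.iterDeriv hne m)
  refine h1.mono ?_
  have h2 : ((p m).natDegree : ℤ) - (m : ℤ) ≤ s0 M p :=
    Finset.le_sup' (fun m : ℕ => ((p m).natDegree : ℤ) - (m : ℤ)) hm
  omega

/-! ### `ntilde` arithmetic -/

lemma floor_half (a : ℤ) : ⌊((a : ℚ)) / 2⌋ = a / 2 := by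
  simpa using Rat.floor_intCast_div_natCast a 2

lemma ntilde_eq (k : ℤ) (n : ℕ) :
    ntilde k n = (-k - 1) / 2 + (if Even ((n : ℤ) + k + 1) then 1 else -1) * (((n : ℤ) + 1) / 2) := by
  unfold ntilde
  have h1 : (-(k : ℚ) - 1) / 2 = (((-k - 1 : ℤ) : ℚ)) / 2 := by push_cast; ring
  have h2 : ((n : ℚ) + 1) / 2 = ((((n : ℤ) + 1 : ℤ) : ℚ)) / 2 := by push_cast; ring
  rw [h1, floor_half, h2, floor_half]

lemma ntilde_bounds (kd : ℤ) (m : ℕ) (h0 : (m : ℤ) ≤ kd - 1) :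
    -kd ≤ ntilde kd m ∧ ntilde kd m ≤ -1 := by
  have hm : (0 : ℤ) ≤ (m : ℤ) := Int.natCast_nonneg m
  rw [ntilde_eq]
  by_cases h : Even ((m : ℤ) + kd + 1)
  · rw [if_pos h]
    rw [Int.even_iff] at h
    omega
  · rw [if_neg h]
    rw [Int.not_even_iff] at h
    omega

lemma ntilde_cases (k₀ : ℤ) (n : ℕ) (hk : 0 ≤ k₀) (hn : k₀ ≤ (n : ℤ)) :
    0 ≤ ntilde k₀ n ∨ ntilde k₀ n ≤ -(k₀ + 1) := by
  rw [ntilde_eq]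
  by_cases h : Even ((n : ℤ) + k₀ + 1)
  · rw [if_pos h]
    rw [Int.even_iff] at h
    omega
  · rw [if_neg h]
    rw [Int.not_even_iff] at h
    omega

/-! ### `psi` and `ebasis` in the `InT` scale -/

lemma psi_eq (k nn : ℤ) (x : ℝ) (hp : (x : ℂ) + Complex.I ≠ 0) :
    psi k nn x = ((x : ℂ) - Complex.I) ^ nn * ((x : ℂ) + Complex.I) ^ (-(k + 1) - nn) := by
  unfold psi
  rw [div_zpow, zpow_sub₀ hp]
  ring

lemma hne_negI : ∀ y : ℝ, (y : ℂ) - (-Complex.I) ≠ 0 := pole_sub_ne (Or.inr rfl)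
lemma hne_posI : ∀ y : ℝ, (y : ℂ) - Complex.I ≠ 0 := pole_sub_ne (Or.inl rfl)

lemma hp_ne (x : ℝ) : (x : ℂ) + Complex.I ≠ 0 := by
  have := hne_negI x
  simpa [sub_neg_eq_add] using this

lemma psi_inT_pos (k nn : ℤ) (h : 0 ≤ nn) : InT (-Complex.I) (-(k + 1)) (psi k nn) := by
  have hne := hne_negI
  have h1 : InT (-Complex.I) nn (fun x : ℝ => ((x : ℂ) - Complex.I) ^ nn) := by
    have h2 := affine_pow_inT (c := -Complex.I) hne (-Complex.I) nn.toNat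
    have h3 : (fun x : ℝ => ((x : ℂ) + -Complex.I) ^ nn.toNat)
        = fun x : ℝ => ((x : ℂ) - Complex.I) ^ nn := by
      funext x
      rw [← sub_eq_add_neg, ← zpow_natCast, Int.toNat_of_nonneg h]
    have h4 : ((nn.toNat : ℤ)) = nn := Int.toNat_of_nonneg h
    exact (h2.congr h3).mono (by omega)
  have h5 : InT (-Complex.I) (-(k + 1) - nn)
      (fun x : ℝ => ((x : ℂ) + Complex.I) ^ (-(k + 1) - nn)) := by
    have := InT.single (c := -Complex.I) (d := -(k + 1) - nn) (-(k + 1) - nn) le_rfl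
    exact this.congr (by funext x; rw [sub_neg_eq_add])
  have h6 := InT.mul hne h1 h5
  refine (h6.mono (by omega)).congr ?_
  funext x
  exact (psi_eq k nn x (hp_ne x)).symm

lemma psi_inT_neg (k nn : ℤ) (h : nn ≤ -(k + 1)) : InT Complex.I (-(k + 1)) (psi k nn) := by
  have hne := hne_posI
  have h1 : InT Complex.I nn (fun x : ℝ => ((x : ℂ) - Complex.I) ^ nn) :=
    InT.single nn le_rfl
  have h5 : InT Complex.I (-(k + 1) - nn)
      (fun x : ℝ => ((x : ℂ) + Complex.I) ^ (-(k + 1) - nn)) := by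
    have h2 := affine_pow_inT (c := Complex.I) hne Complex.I (-(k + 1) - nn).toNat
    have h3 : (fun x : ℝ => ((x : ℂ) + Complex.I) ^ (-(k + 1) - nn).toNat)
        = fun x : ℝ => ((x : ℂ) + Complex.I) ^ (-(k + 1) - nn) := by
      funext x
      rw [← zpow_natCast, Int.toNat_of_nonneg (by omega)]
    have h4 : (((-(k + 1) - nn).toNat : ℤ)) = -(k + 1) - nn := Int.toNat_of_nonneg (by omega)
    exact (h2.congr h3).mono (by omega)
  have h6 := InT.mul hne h1 h5
  refine (h6.mono (by omega)).congr ?_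
  funext x
  exact (psi_eq k nn x (hp_ne x)).symm

/-! ### The conjugate-weight factor -/

lemma conj_weight_inT (hc : c = Complex.I ∨ c = -Complex.I) (kd : ℤ) (m : ℕ)
    (h1 : -kd ≤ ntilde kd m) (h2 : ntilde kd m ≤ -1) :
    InT c (kd - 1) (fun x : ℝ =>
      (starRingEnd ℂ) (ebasis kd m x) * ((((x ^ 2 + 1) ^ kd : ℝ)) : ℂ)) := by
  have hne := pole_sub_ne hc
  set t := ntilde kd m with ht
  have key : ∀ x : ℝ, (starRingEnd ℂ) (ebasis kd m x) * ((((x ^ 2 + 1) ^ kd : ℝ)) : ℂ)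
      = (((Real.sqrt Real.pi)⁻¹ : ℝ) : ℂ) *
        (((x : ℂ) + Complex.I) ^ (t + kd).toNat * ((x : ℂ) - Complex.I) ^ (-1 - t).toNat) := by
    intro x
    have hxp : (x : ℂ) + Complex.I ≠ 0 := hp_ne x
    have hxm : (x : ℂ) - Complex.I ≠ 0 := hne_posI x
    have hw : ((((x ^ 2 + 1) ^ kd : ℝ)) : ℂ) = (((x : ℂ) + Complex.I) * ((x : ℂ) - Complex.I)) ^ kd := by
      have hprod : ((x : ℂ) + Complex.I) * ((x : ℂ) - Complex.I) = (x : ℂ) ^ 2 + 1 := by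
        linear_combination -Complex.I_sq
      rw [hprod]
      push_cast
      rfl
    have hconj : (starRingEnd ℂ) (ebasis kd m x)
        = (((Real.sqrt Real.pi)⁻¹ : ℝ) : ℂ) *
          (((x : ℂ) - Complex.I) ^ (-(kd + 1)) * (((x : ℂ) + Complex.I) / ((x : ℂ) - Complex.I)) ^ t) := by
      unfold ebasis psi
      rw [map_mul, Complex.conj_ofReal, map_mul, map_zpow₀, map_zpow₀, map_add, map_div₀,
        map_sub, map_add, Complex.conj_I, Complex.conj_ofReal]
      rw [← ht]
      ring_nf
    rw [hconj, hw]
    have e1 : ((x : ℂ) + Complex.I) ^ (t + kd).toNat = ((x : ℂ) + Complex.I) ^ (t + kd) := by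
      rw [← zpow_natCast, Int.toNat_of_nonneg (by omega)]
    have e2 : ((x : ℂ) - Complex.I) ^ (-1 - t).toNat = ((x : ℂ) - Complex.I) ^ (-1 - t) := by
      rw [← zpow_natCast, Int.toNat_of_nonneg (by omega)]
    rw [e1, e2, div_zpow, mul_zpow, zpow_add₀ hxp,
      show (-1 - t : ℤ) = -(kd + 1) + (-t) + kd from by ring,
      zpow_add₀ hxm, zpow_add₀ hxm, zpow_neg ((x : ℂ) - Complex.I) t]
    field_simp
  have hA : InT c ((t + kd).toNat : ℤ) (fun x : ℝ => ((x : ℂ) + Complex.I) ^ (t + kd).toNat) :=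
    affine_pow_inT hne Complex.I _
  have hB : InT c ((-1 - t).toNat : ℤ) (fun x : ℝ => ((x : ℂ) - Complex.I) ^ (-1 - t).toNat) := by
    have := affine_pow_inT hne (-Complex.I) (-1 - t).toNat
    exact this.congr (by funext x; rw [← sub_eq_add_neg])
  have hAB := InT.mul hne hA hB
  have hdeg : ((t + kd).toNat : ℤ) + ((-1 - t).toNat : ℤ) = kd - 1 := by omega
  have hC := (hAB.mono (le_of_eq hdeg)).const_mul ((((Real.sqrt Real.pi)⁻¹ : ℝ)) : ℂ)
  exact hC.congr (by funext x; exact (key x).symm)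

end Stmt13Aux

/-- In the band-matrix setup (polynomial coefficients `p_0, …, p_M`
with `p_M ≠ 0`, integer `k₀ ≥ 0` and `k₀◊ ≤ k₀ - s₀`): `b_m^n = 0` whenever
`m ≤ k₀◊ - 1` and `n ≥ k₀`. -/
theorem stmt13 (M : ℕ) (hM : 1 ≤ M) (p : ℕ → Polynomial ℂ) (hpM : p M ≠ 0)
    (k₀ : ℤ) (hk₀ : 0 ≤ k₀) (kd : ℤ) (hkd : kd ≤ k₀ - s0 M p) :
    ∀ m n : ℕ, (m : ℤ) ≤ kd - 1 → k₀ ≤ (n : ℤ) → bmat M p k₀ kd m n = 0 := by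
  intro m n hm hn
  have hm0 : (0 : ℤ) ≤ (m : ℤ) := Int.natCast_nonneg m
  have hkd1 : 1 ≤ kd := by omega
  obtain ⟨hb1, hb2⟩ := Stmt13Aux.ntilde_bounds kd m hm
  rcases Stmt13Aux.ntilde_cases k₀ n hk₀ hn with hpos | hneg
  · -- integrand holomorphic away from `-i`
    have hc : (-Complex.I : ℂ) = Complex.I ∨ (-Complex.I : ℂ) = -Complex.I := Or.inr rfl
    have hne := Stmt13Aux.pole_sub_ne hc
    have he : Stmt13Aux.InT (-Complex.I) (-(k₀ + 1)) (ebasis k₀ n) := by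
      have := (Stmt13Aux.psi_inT_pos k₀ (ntilde k₀ n) hpos).const_mul
        ((((Real.sqrt Real.pi)⁻¹ : ℝ)) : ℂ)
      exact this
    have hP : Stmt13Aux.InT (-Complex.I) (-kd - 1) (Pop M p (ebasis k₀ n)) :=
      (Stmt13Aux.Pop_inT hne M p he).mono (by omega)
    have hF := Stmt13Aux.conj_weight_inT hc kd m hb1 hb2
    have hG := (Stmt13Aux.InT.mul hne hP hF).mono (show -kd - 1 + (kd - 1) ≤ -2 by omega)
    have hz := hG.integral_zero hc
    unfold bmat
    simp only [mul_assoc]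
    exact hz
  · -- integrand holomorphic away from `i`
    have hc : (Complex.I : ℂ) = Complex.I ∨ (Complex.I : ℂ) = -Complex.I := Or.inl rfl
    have hne := Stmt13Aux.pole_sub_ne hc
    have he : Stmt13Aux.InT Complex.I (-(k₀ + 1)) (ebasis k₀ n) := by
      have := (Stmt13Aux.psi_inT_neg k₀ (ntilde k₀ n) hneg).const_mul
        ((((Real.sqrt Real.pi)⁻¹ : ℝ)) : ℂ)
      exact this
    have hP : Stmt13Aux.InT Complex.I (-kd - 1) (Pop M p (ebasis k₀ n)) :=
      (Stmt13Aux.Pop_inT hne M p he).mono (by omega)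
    have hF := Stmt13Aux.conj_weight_inT hc kd m hb1 hb2
    have hG := (Stmt13Aux.InT.mul hne hP hF).mono (show -kd - 1 + (kd - 1) ≤ -2 by omega)
    have hz := hG.integral_zero hc
    unfold bmat
    simp only [mul_assoc]
    exact hz
end
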